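/- arXiv:1308.0748 — 4 statements merged into one kernel-verified Lean document; each statement's English description precedes it below -/
import Mathlib

section
/- Every derivation of the Lie algebra sl_n(F) over a field F of characteristic zero is inner: if D : sl_n(F) → sl_n(F) is F-linear and D([ξ,η]) = [D(ξ),η] + [ξ,D(η)] for all ξ, η, then there exists v ∈ sl_n(F) with D(ξ) = [ξ, v] for all ξ. -/
open Matrix LieAlgebra LieAlgebra.SpecialLinear

attribute [local instance 100] LieRing.ofAssociativeRing

namespace Whitehead3

variable {n : ℕ} {F : Type*} [Field F]

lemma mem_sl_iff {X : Matrix (Fin n) (Fin n) F} : X ∈ sl (Fin n) F ↔ X.trace = 0 := Iff.rfl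

lemma repr_stdBasis (A : Matrix (Fin n) (Fin n) F) (p : Fin n × Fin n) :
    (Matrix.stdBasis F (Fin n) (Fin n)).repr A p = A p.1 p.2 := by
  have h : A = ∑ q : Fin n × Fin n, A q.1 q.2 • Matrix.stdBasis F (Fin n) (Fin n) q := by
    conv_rhs => rw [Fintype.sum_prod_type]
    simp only [Matrix.stdBasis_eq_single, Matrix.smul_single,
      smul_eq_mul, mul_one]
    exact matrix_eq_sum_single A
  conv_lhs => rw [h]
  rw [(Matrix.stdBasis F (Fin n) (Fin n)).repr_sum_self]

lemma trace_sandwich (a b : Matrix (Fin n) (Fin n) F) :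
    LinearMap.trace F _ ((LinearMap.mulRight F b) ∘ₗ (LinearMap.mulLeft F a)) =
      a.trace * b.trace := by
  classical
  rw [LinearMap.trace_eq_matrix_trace F (Matrix.stdBasis F (Fin n) (Fin n))]
  rw [Matrix.trace]
  have key : ∀ p : Fin n × Fin n,
      (LinearMap.toMatrix (Matrix.stdBasis F (Fin n) (Fin n))
        (Matrix.stdBasis F (Fin n) (Fin n))
        ((LinearMap.mulRight F b) ∘ₗ (LinearMap.mulLeft F a))).diag p
      = a p.1 p.1 * b p.2 p.2 := by
    intro p
    rw [Matrix.diag_apply, LinearMap.toMatrix_apply, repr_stdBasis,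
      Matrix.stdBasis_eq_single]
    simp only [LinearMap.coe_comp, Function.comp_apply, LinearMap.mulLeft_apply,
      LinearMap.mulRight_apply, Matrix.mul_apply, Matrix.single, Matrix.of_apply,
      mul_ite, mul_one, mul_zero, ite_mul, zero_mul, Finset.sum_ite_eq, Finset.sum_ite_eq',
      Finset.mem_univ, if_true, Finset.sum_ite_irrel, Finset.sum_const_zero, ite_and]
  rw [Finset.sum_congr rfl (fun p _ => key p)]
  rw [Fintype.sum_prod_type, Matrix.trace, Matrix.trace, Finset.sum_mul_sum]
  simp [Matrix.diag_apply]

lemma killing_gl (x y : Matrix (Fin n) (Fin n) F) :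
    LinearMap.trace F _ ((ad F (Matrix (Fin n) (Fin n) F) x) ∘ₗ (ad F _ y)) =
      (2 * n : F) * (x * y).trace - 2 * (x.trace * y.trace) := by
  have hcomp : (ad F (Matrix (Fin n) (Fin n) F) x) ∘ₗ (ad F _ y) =
      ((LinearMap.mulRight F (1 : Matrix (Fin n) (Fin n) F)) ∘ₗ (LinearMap.mulLeft F (x * y)))
      - ((LinearMap.mulRight F y) ∘ₗ (LinearMap.mulLeft F x))
      - ((LinearMap.mulRight F x) ∘ₗ (LinearMap.mulLeft F y))
      + ((LinearMap.mulRight F (y * x)) ∘ₗ (LinearMap.mulLeft F 1)) := by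
    refine LinearMap.ext fun m => ?_
    simp only [LinearMap.coe_comp, Function.comp_apply, LinearMap.sub_apply, LinearMap.add_apply,
      LinearMap.mulLeft_apply, LinearMap.mulRight_apply, ad_apply, Ring.lie_def]
    noncomm_ring
  rw [hcomp]
  simp only [map_sub, map_add, trace_sandwich]
  rw [Matrix.trace_one, Matrix.trace_mul_comm y x]
  push_cast [Fintype.card_fin]
  ring

instance : Module.Finite F (sl (Fin n) F) :=
  inferInstanceAs (Module.Finite F (LieSubalgebra.toSubmodule (sl (Fin n) F)))

lemma killing_sl (x y : sl (Fin n) F) :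
    killingForm F (sl (Fin n) F) x y =
      (2 * n : F) * ((x : Matrix (Fin n) (Fin n) F) * (y : Matrix (Fin n) (Fin n) F)).trace := by
  classical
  have hmem : ∀ m, ((ad F (Matrix (Fin n) (Fin n) F) (x : Matrix (Fin n) (Fin n) F)) ∘ₗ
      (ad F (Matrix (Fin n) (Fin n) F) (y : Matrix (Fin n) (Fin n) F))) m ∈
      LieSubalgebra.toSubmodule (sl (Fin n) F) := by
    intro m
    simp only [LinearMap.coe_comp, Function.comp_apply, ad_apply]
    exact mem_sl_iff.mpr (matrix_trace_commutator_zero _ _ _ _)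
  have hfact : (ad F (sl (Fin n) F) x) ∘ₗ (ad F (sl (Fin n) F) y) =
      (LinearMap.codRestrict (LieSubalgebra.toSubmodule (sl (Fin n) F)) _ hmem) ∘ₗ
      (LieSubalgebra.toSubmodule (sl (Fin n) F)).subtype := by
    refine LinearMap.ext fun z => ?_
    apply Subtype.ext
    rfl
  rw [killingForm_apply_apply, hfact, LinearMap.trace_comp_comm']
  have h2 : (LieSubalgebra.toSubmodule (sl (Fin n) F)).subtype ∘ₗ
      (LinearMap.codRestrict (LieSubalgebra.toSubmodule (sl (Fin n) F)) _ hmem) =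
      (ad F (Matrix (Fin n) (Fin n) F) (x : Matrix (Fin n) (Fin n) F)) ∘ₗ
      (ad F (Matrix (Fin n) (Fin n) F) (y : Matrix (Fin n) (Fin n) F)) := rfl
  rw [h2, killing_gl]
  have hx : (x : Matrix (Fin n) (Fin n) F).trace = 0 := x.2
  rw [hx]
  ring

lemma trace_stdBasisMatrix_mul (i j : Fin n) (x : Matrix (Fin n) (Fin n) F) :
    (Matrix.single i j (1 : F) * x).trace = x j i := by
  classical
  simp [Matrix.trace, Matrix.diag, Matrix.mul_apply, Matrix.single, ite_and,
    Finset.sum_ite_eq]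

instance [CharZero F] : LieAlgebra.IsKilling F (sl (Fin n) F) := by
  constructor
  rw [eq_bot_iff]
  intro x hx
  rw [LieIdeal.mem_killingCompl] at hx
  rw [LieSubmodule.mem_bot]
  rcases Nat.eq_zero_or_pos n with hn | hn
  · apply Subtype.ext
    subst hn
    ext i j
    exact i.elim0
  · have hncast : (n : F) ≠ 0 := Nat.cast_ne_zero.mpr hn.ne'
    have hcast : (2 * n : F) ≠ 0 := mul_ne_zero two_ne_zero hncast
    have key : ∀ y : sl (Fin n) F,
        ((y : Matrix (Fin n) (Fin n) F) * (x : Matrix (Fin n) (Fin n) F)).trace = 0 := by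
      intro y
      have h := hx y (LieSubmodule.mem_top _)
      rw [killing_sl] at h
      exact (mul_eq_zero.mp h).resolve_left hcast
    have hoff : ∀ i j : Fin n, i ≠ j → (x : Matrix (Fin n) (Fin n) F) i j = 0 := by
      intro i j hij
      have h := key (LieAlgebra.SpecialLinear.single j i hij.symm (1 : F))
      rwa [val_single, trace_stdBasisMatrix_mul] at h
    have hdiag : ∀ i j : Fin n,
        (x : Matrix (Fin n) (Fin n) F) i i = (x : Matrix (Fin n) (Fin n) F) j j := by
      intro i j
      rcases eq_or_ne i j with rfl | hij
      · rfl
      · have hy : (Matrix.single i i (1 : F) - Matrix.single j j (1 : F)) ∈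
            sl (Fin n) F := by
          refine mem_sl_iff.mpr ?_
          rw [Matrix.trace_sub, Matrix.trace_single_eq_same, Matrix.trace_single_eq_same,
            sub_self]
        have h := key ⟨_, hy⟩
        rw [Matrix.sub_mul, Matrix.trace_sub, trace_stdBasisMatrix_mul,
          trace_stdBasisMatrix_mul] at h
        exact sub_eq_zero.mp h
    apply Subtype.ext
    have htr0 : (x : Matrix (Fin n) (Fin n) F).trace = 0 := x.2
    have hzero : (x : Matrix (Fin n) (Fin n) F) ⟨0, hn⟩ ⟨0, hn⟩ = 0 := by
      have hsum : (n : F) * (x : Matrix (Fin n) (Fin n) F) ⟨0, hn⟩ ⟨0, hn⟩ = 0 := by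
        calc (n : F) * (x : Matrix (Fin n) (Fin n) F) ⟨0, hn⟩ ⟨0, hn⟩
            = ∑ _i : Fin n, (x : Matrix (Fin n) (Fin n) F) ⟨0, hn⟩ ⟨0, hn⟩ := by
              simp [Finset.sum_const, mul_comm]
          _ = ∑ i : Fin n, (x : Matrix (Fin n) (Fin n) F) i i :=
              Finset.sum_congr rfl (fun i _ => (hdiag i ⟨0, hn⟩).symm)
          _ = 0 := htr0
      exact (mul_eq_zero.mp hsum).resolve_left hncast
    ext i j
    rcases eq_or_ne i j with rfl | hij
    · simp only [ZeroMemClass.coe_zero, Matrix.zero_apply]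
      rw [hdiag i ⟨0, hn⟩, hzero]
    · simp only [ZeroMemClass.coe_zero, Matrix.zero_apply]
      exact hoff i j hij

end Whitehead3


/-- First Whitehead lemma for `sl_n`: every derivation of the Lie algebra of trace-zero
`n × n` matrices over a field of characteristic zero is inner: if `D` is `F`-linear on
trace-zero matrices, preserves the trace-zero condition, and satisfies the Leibniz rule for
the commutator bracket `[a,b] = a*b - b*a`, then `D ξ = [ξ, v]` for a fixed trace-zero `v`. -/
theorem statement3 {n : ℕ} {F : Type*} [Field F] [CharZero F]
    (D : Matrix (Fin n) (Fin n) F → Matrix (Fin n) (Fin n) F)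
    (htr : ∀ ξ : Matrix (Fin n) (Fin n) F, ξ.trace = 0 → (D ξ).trace = 0)
    (hadd : ∀ ξ η : Matrix (Fin n) (Fin n) F, ξ.trace = 0 → η.trace = 0 →
      D (ξ + η) = D ξ + D η)
    (hsmul : ∀ (c : F) (ξ : Matrix (Fin n) (Fin n) F), ξ.trace = 0 → D (c • ξ) = c • D ξ)
    (hder : ∀ ξ η : Matrix (Fin n) (Fin n) F, ξ.trace = 0 → η.trace = 0 →
      D (ξ * η - η * ξ) = (D ξ * η - η * D ξ) + (ξ * D η - D η * ξ)) :
    ∃ v : Matrix (Fin n) (Fin n) F, v.trace = 0 ∧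
      ∀ ξ : Matrix (Fin n) (Fin n) F, ξ.trace = 0 → D ξ = ξ * v - v * ξ := by
  classical
  have mem : ∀ {X : Matrix (Fin n) (Fin n) F}, X ∈ sl (Fin n) F → X.trace = 0 :=
    fun h => Whitehead3.mem_sl_iff.mp h
  let Dlin : (sl (Fin n) F) →ₗ[F] (sl (Fin n) F) :=
    { toFun := fun x => ⟨D x.val, Whitehead3.mem_sl_iff.mpr (htr _ (mem x.2))⟩
      map_add' := fun a b => Subtype.ext (hadd _ _ (mem a.2) (mem b.2))
      map_smul' := fun c a => Subtype.ext (hsmul c _ (mem a.2)) }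
  let D' : LieDerivation F (sl (Fin n) F) (sl (Fin n) F) :=
    { toLinearMap := Dlin
      leibniz' := fun a b => by
        apply Subtype.ext
        have h := hder a.val b.val (mem a.2) (mem b.2)
        have hL : (Dlin ⁅a, b⁆).val = D (a.val * b.val - b.val * a.val) := by
          have : (⁅a, b⁆ : sl (Fin n) F).val = a.val * b.val - b.val * a.val :=
            sl_bracket (Fin n) F a b
          simp only [Dlin, LinearMap.coe_mk, AddHom.coe_mk, this]
        have hR : ((⁅a, Dlin b⁆ - ⁅b, Dlin a⁆ : sl (Fin n) F)).val =
            (a.val * (D b.val) - (D b.val) * a.val) -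
            (b.val * (D a.val) - (D a.val) * b.val) := by
          have h1 : (⁅a, Dlin b⁆ : sl (Fin n) F).val =
              a.val * (D b.val) - (D b.val) * a.val := sl_bracket (Fin n) F a (Dlin b)
          have h2 : (⁅b, Dlin a⁆ : sl (Fin n) F).val =
              b.val * (D a.val) - (D a.val) * b.val := sl_bracket (Fin n) F b (Dlin a)
          rw [AddSubgroupClass.coe_sub, h1, h2]
        rw [hL, hR, h]
        abel }
  obtain ⟨w, hw⟩ := LieDerivation.IsKilling.exists_eq_ad (R := F) D'
  refine ⟨-(w.val), ?_, ?_⟩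
  · rw [Matrix.trace_neg, mem w.2, neg_zero]
  · intro ξ hξ
    have h := DFunLike.congr_fun hw (⟨ξ, Whitehead3.mem_sl_iff.mpr hξ⟩ : sl (Fin n) F)
    have had : ((LieDerivation.ad F (sl (Fin n) F)) w)
        (⟨ξ, Whitehead3.mem_sl_iff.mpr hξ⟩ : sl (Fin n) F) =
        ⁅w, (⟨ξ, Whitehead3.mem_sl_iff.mpr hξ⟩ : sl (Fin n) F)⁆ := by
      simp
    rw [had] at h
    have h3 := congrArg Subtype.val h
    have h4 : (⁅w, (⟨ξ, Whitehead3.mem_sl_iff.mpr hξ⟩ : sl (Fin n) F)⁆ :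
        sl (Fin n) F).val = w.val * ξ - ξ * w.val :=
      sl_bracket (Fin n) F w ⟨ξ, Whitehead3.mem_sl_iff.mpr hξ⟩
    rw [h4] at h3
    have h5 : D ξ = w.val * ξ - ξ * w.val := h3.symm
    rw [h5]
    simp only [mul_neg, neg_mul, sub_neg_eq_add]
    abel
end

section
/- Let R be a complete discrete valuation ring with maximal ideal (p), p an odd prime, and fraction field K. Suppose f : GL_n(R) → gl_n(R) is a map of R-schemes which is a cocycle for the adjoint action, i.e. f(g₁g₂) = f(g₁) + g₁ f(g₂) g₁⁻¹ for all g₁, g₂ ∈ GL_n(R), and suppose there exists v_K ∈ gl_n(K) with f(g) = g v_K g⁻¹ − v_K for all g ∈ GL_n(K) ∩ GL_n(R). Then there exists v ∈ gl_n(R) with f(g) = g v g⁻¹ − v for all g ∈ GL_n(R). -/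
private lemma key_scalar {R : Type*} [CommRing R] {n : ℕ} (q : R) (w : Matrix (Fin n) (Fin n) R)
    (h : ∀ g : GL (Fin n) R,
      ∃ u : Matrix (Fin n) (Fin n) R,
        (g : Matrix (Fin n) (Fin n) R) * w * ((g⁻¹ : GL (Fin n) R) : Matrix (Fin n) (Fin n) R) - w
          = q • u) :
    ∃ (c : R) (v : Matrix (Fin n) (Fin n) R),
      w = c • (1 : Matrix (Fin n) (Fin n) R) + q • v := by
  match n, w, h with
  | 0, w, h => exact ⟨0, 0, by ext i; exact i.elim0⟩
  | (m+1), w, h =>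
    have key : ∀ i j : Fin (m+1), i ≠ j → q ∣ w j i ∧ q ∣ (w j j - w i i) := by
      intro i j hij
      set E := Matrix.single i j (1 : R) with hEdef
      have hE2 : E * E = 0 := Matrix.single_mul_single_of_ne 1 i j i hij.symm 1
      have h1 : (1 + E) * (1 - E) = 1 := by
        have : (1 + E) * (1 - E) = 1 - E * E := by noncomm_ring
        rw [this, hE2, sub_zero]
      have h2 : (1 - E) * (1 + E) = 1 := by
        have : (1 - E) * (1 + E) = 1 - E * E := by noncomm_ring
        rw [this, hE2, sub_zero]
      let g : GL (Fin (m+1)) R := ⟨1 + E, 1 - E, h1, h2⟩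
      obtain ⟨u, hu⟩ := h g
      have hg : (g : Matrix (Fin (m+1)) (Fin (m+1)) R) = 1 + E := rfl
      have hginv : ((g⁻¹ : GL (Fin (m+1)) R) : Matrix (Fin (m+1)) (Fin (m+1)) R) = 1 - E := rfl
      rw [hg, hginv] at hu
      have expand : (1 + E) * w * (1 - E) - w = E * w - w * E - E * w * E := by noncomm_ring
      rw [expand] at hu
      have e1 := congrFun (congrFun hu i) i
      have e2 := congrFun (congrFun hu i) j
      simp only [Matrix.sub_apply, Matrix.smul_apply, smul_eq_mul, hEdef,
        Matrix.single_mul_apply_same, one_mul,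
        Matrix.mul_single_apply_same, mul_one] at e1 e2
      rw [Matrix.mul_single_apply_of_ne 1 i j i i hij w,
        Matrix.mul_single_apply_of_ne 1 i j i i hij
          (Matrix.single i j 1 * w)] at e1
      -- e1 : w j i - 0 - 0 = q * u i i
      -- e2 : w j j - w i i - w j i = q * u i j
      constructor
      · exact ⟨u i i, by linear_combination e1⟩
      · exact ⟨u i j + u i i, by linear_combination e2 + e1⟩
    have hoff : ∀ k l, k ≠ l → q ∣ w k l := fun k l hkl => (key l k hkl.symm).1
    have hdiag : ∀ k, q ∣ (w k k - w 0 0) := by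
      intro k
      by_cases hk : k = 0
      · subst hk; simp
      · exact (key 0 k (Ne.symm hk)).2
    have hall : ∀ k l, q ∣ (w k l - w 0 0 * (1 : Matrix (Fin (m+1)) (Fin (m+1)) R) k l) := by
      intro k l
      by_cases hkl : k = l
      · subst hkl; rw [Matrix.one_apply_eq, mul_one]; exact hdiag k
      · rw [Matrix.one_apply_ne hkl, mul_zero, sub_zero]; exact hoff k l hkl
    choose v hv using fun kl : Fin (m+1) × Fin (m+1) => hall kl.1 kl.2
    refine ⟨w 0 0, Matrix.of (fun k l => v (k, l)), ?_⟩
    ext k l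
    have := hv (k, l)
    simp only [Matrix.add_apply, Matrix.smul_apply, smul_eq_mul, Matrix.of_apply]
    linear_combination this

/-- Descent of the coboundary property from the fraction field to the ring: let `R` be a
complete discrete valuation ring with maximal ideal `(p)`, `p` an odd prime, and fraction
field `K`.  If `f : GL_n(R) → gl_n(R)` is a regular map (a map of `R`-schemes) which is a
cocycle for the adjoint action, and if over `K` one has `f(g) = g v_K g⁻¹ - v_K` for some
`v_K ∈ gl_n(K)` and all `g ∈ GL_n(R)`, then there is `v ∈ gl_n(R)` with
`f(g) = g v g⁻¹ - v` for all `g ∈ GL_n(R)`. -/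
theorem statement4 {n : ℕ} {R K : Type*} [CommRing R] [IsDomain R] [IsDiscreteValuationRing R]
    (p : ℕ) (hp : p.Prime) (hodd : p ≠ 2)
    (hmax : IsLocalRing.maximalIdeal R = Ideal.span {(p : R)})
    (hcomplete : IsAdicComplete (Ideal.span {(p : R)}) R)
    [Field K] [Algebra R K] [IsFractionRing R K]
    (f : GL (Fin n) R → Matrix (Fin n) (Fin n) R)
    (hreg : ∃ P : Fin n → Fin n → MvPolynomial ((Fin n × Fin n) ⊕ (Fin n × Fin n)) R,
      ∀ g : GL (Fin n) R, ∀ i j : Fin n,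
        f g i j = MvPolynomial.eval
          (Sum.elim (fun q => (g : Matrix (Fin n) (Fin n) R) q.1 q.2)
            (fun q => ((g⁻¹ : GL (Fin n) R) : Matrix (Fin n) (Fin n) R) q.1 q.2)) (P i j))
    (hcoc : ∀ g₁ g₂ : GL (Fin n) R,
      f (g₁ * g₂) = f g₁ + (g₁ : Matrix (Fin n) (Fin n) R) * f g₂ *
        ((g₁⁻¹ : GL (Fin n) R) : Matrix (Fin n) (Fin n) R))
    (vK : Matrix (Fin n) (Fin n) K)
    (hK : ∀ g : GL (Fin n) R,
      (f g).map (algebraMap R K) =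
        ((g : Matrix (Fin n) (Fin n) R).map (algebraMap R K)) * vK *
          (((g⁻¹ : GL (Fin n) R) : Matrix (Fin n) (Fin n) R).map (algebraMap R K)) - vK) :
    ∃ v : Matrix (Fin n) (Fin n) R, ∀ g : GL (Fin n) R,
      f g = (g : Matrix (Fin n) (Fin n) R) * v *
        ((g⁻¹ : GL (Fin n) R) : Matrix (Fin n) (Fin n) R) - v := by
  classical
  set a := algebraMap R K with ha_def
  have ha : Function.Injective a := IsFractionRing.injective R K
  have hirr : Irreducible ((p : ℕ) : R) :=
    (IsDiscreteValuationRing.irreducible_iff_uniformizer _).mpr hmax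
  have hp0 : ((p : ℕ) : R) ≠ 0 := hirr.ne_zero
  have hap0 : a ((p : ℕ) : R) ≠ 0 := fun h => hp0 (ha (by simpa using h))
  -- Step 1: clear denominators entrywise
  have step : ∀ x : K, ∃ (m : ℕ) (r : R), a ((p : ℕ) : R) ^ m * x = a r := by
    intro x
    obtain ⟨r, s, hs, hx⟩ := IsFractionRing.div_surjective (A := R) x
    have hs0 : s ≠ 0 := nonZeroDivisors.ne_zero hs
    obtain ⟨m, u, hsu⟩ := IsDiscreteValuationRing.eq_unit_mul_pow_irreducible hs0 hirr
    refine ⟨m, (↑u⁻¹ : R) * r, ?_⟩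
    have hsK : a s ≠ 0 := fun h => hs0 (ha (by simpa using h))
    rw [← hx, mul_div_assoc', div_eq_iff hsK, ← map_pow, ← map_mul, ← map_mul]
    refine congrArg a ?_
    rw [hsu]
    calc ((p : ℕ) : R) ^ m * r = ((↑u⁻¹ : R) * ↑u) * (r * ((p : ℕ) : R) ^ m) := by
          rw [Units.inv_mul, one_mul]; ring
      _ = (↑u⁻¹ : R) * r * (↑u * ((p : ℕ) : R) ^ m) := by ring
  -- Step 2: clear denominators for the whole matrix
  obtain ⟨M, w, hw⟩ : ∃ (M : ℕ) (w : Matrix (Fin n) (Fin n) R),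
      ∀ i j, a ((p : ℕ) : R) ^ M * vK i j = a (w i j) := by
    choose m r hr using fun ij : Fin n × Fin n => step (vK ij.1 ij.2)
    refine ⟨Finset.univ.sup m,
      Matrix.of (fun i j => ((p : ℕ) : R) ^ (Finset.univ.sup m - m (i, j)) * r (i, j)),
      fun i j => ?_⟩
    have hle : m (i, j) ≤ Finset.univ.sup m := Finset.le_sup (Finset.mem_univ (i, j))
    calc a ((p : ℕ) : R) ^ Finset.univ.sup m * vK i j
        = a ((p : ℕ) : R) ^ (Finset.univ.sup m - m (i, j)) *
            (a ((p : ℕ) : R) ^ m (i, j) * vK i j) := by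
          rw [← mul_assoc, ← pow_add, Nat.sub_add_cancel hle]
      _ = a ((p : ℕ) : R) ^ (Finset.univ.sup m - m (i, j)) * a (r (i, j)) := by rw [hr]
      _ = a (((p : ℕ) : R) ^ (Finset.univ.sup m - m (i, j)) * r (i, j)) := by
          rw [map_mul, map_pow]
  have hwmap : w.map a = a (((p : ℕ) : R) ^ M) • vK := by
    ext i j
    simp only [Matrix.map_apply, Matrix.smul_apply, smul_eq_mul, map_pow]
    exact (hw i j).symm
  -- Step 3: the conjugation differences of w are divisible by p^M
  have hkey : ∀ g : GL (Fin n) R,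
      ∃ u : Matrix (Fin n) (Fin n) R,
        (g : Matrix (Fin n) (Fin n) R) * w * ((g⁻¹ : GL (Fin n) R) : Matrix (Fin n) (Fin n) R) - w
          = (((p : ℕ) : R) ^ M) • u := by
    intro g
    refine ⟨f g, ?_⟩
    have hinj : Function.Injective (fun A : Matrix (Fin n) (Fin n) R => A.map a) := by
      intro A B hAB
      ext i j
      exact ha (congrFun (congrFun hAB i) j)
    apply hinj
    show ((g : Matrix (Fin n) (Fin n) R) * w *
      ((g⁻¹ : GL (Fin n) R) : Matrix (Fin n) (Fin n) R) - w).map a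
        = ((((p : ℕ) : R) ^ M) • f g).map a
    have hsm : ((((p : ℕ) : R)) ^ M • f g).map a = a (((p : ℕ) : R) ^ M) • (f g).map a := by
      ext i j
      simp only [Matrix.map_apply, Matrix.smul_apply, smul_eq_mul, map_mul, map_pow]
    rw [Matrix.map_sub _ (fun x y => map_sub a x y), Matrix.map_mul, Matrix.map_mul, hwmap,
      Matrix.mul_smul, Matrix.smul_mul, ← smul_sub, hsm, hK g]
  obtain ⟨c, v, hv⟩ := key_scalar _ w hkey
  refine ⟨v, fun g => ?_⟩
  -- conclude entrywise via injectivity of a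
  have hinj : Function.Injective (fun A : Matrix (Fin n) (Fin n) R => A.map a) := by
    intro A B hAB
    ext i j
    exact ha (congrFun (congrFun hAB i) j)
  apply hinj
  have hgg : (g : Matrix (Fin n) (Fin n) R) *
      ((g⁻¹ : GL (Fin n) R) : Matrix (Fin n) (Fin n) R) = 1 := by
    rw [← Units.val_mul, mul_inv_cancel, Units.val_one]
  have hggK : (g : Matrix (Fin n) (Fin n) R).map a *
      ((g⁻¹ : GL (Fin n) R) : Matrix (Fin n) (Fin n) R).map a = 1 := by
    rw [← Matrix.map_mul, hgg]
    exact Matrix.map_one a (map_zero a) (map_one a)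
  have hcancel : Function.Injective
      (fun A : Matrix (Fin n) (Fin n) K => a (((p : ℕ) : R) ^ M) • A) := by
    intro A B hAB
    have hne : a (((p : ℕ) : R) ^ M) ≠ 0 := by
      rw [map_pow]; exact pow_ne_zero _ hap0
    exact smul_right_injective _ hne hAB
  apply hcancel
  show a (((p : ℕ) : R) ^ M) • (f g).map a
      = a (((p : ℕ) : R) ^ M) •
        ((g : Matrix (Fin n) (Fin n) R) * v *
          ((g⁻¹ : GL (Fin n) R) : Matrix (Fin n) (Fin n) R) - v).map a
  have hmapsub : ((g : Matrix (Fin n) (Fin n) R) * v *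
      ((g⁻¹ : GL (Fin n) R) : Matrix (Fin n) (Fin n) R) - v).map a
      = (g : Matrix (Fin n) (Fin n) R).map a * v.map a *
        ((g⁻¹ : GL (Fin n) R) : Matrix (Fin n) (Fin n) R).map a - v.map a := by
    rw [Matrix.map_sub _ (fun x y => map_sub a x y), Matrix.map_mul, Matrix.map_mul]
  have hwmap2 : ((c • (1 : Matrix (Fin n) (Fin n) R) + ((p : ℕ) : R) ^ M • v)).map a
      = a c • (1 : Matrix (Fin n) (Fin n) K) + a (((p : ℕ) : R) ^ M) • v.map a := by
    ext i j
    simp only [Matrix.map_apply, Matrix.add_apply, Matrix.smul_apply, smul_eq_mul, map_add,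
      map_mul, map_pow]
    congr 1
    rcases eq_or_ne i j with rfl | hij
    · simp
    · simp [Matrix.one_apply_ne hij]
  have key2 : a (((p : ℕ) : R) ^ M) • vK
      = a c • (1 : Matrix (Fin n) (Fin n) K) + a (((p : ℕ) : R) ^ M) • v.map a := by
    rw [← hwmap2, ← hv, hwmap]
  rw [hK g, hmapsub, smul_sub, smul_sub, ← Matrix.smul_mul, ← Matrix.mul_smul, key2,
    Matrix.mul_add, Matrix.add_mul, Matrix.mul_smul, Matrix.mul_smul, Matrix.mul_one,
    Matrix.smul_mul, Matrix.smul_mul, hggK]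
  abel
end

section
/- Let R be a ring with a derivation δ : R → R, let a be an invertible element of R, and let f : R^× → R be expressible as a polynomial F(a, δa, …, δ^n a) with coefficients in R[a, a⁻¹]. If f satisfies the twisted cocycle condition f(a₁a₂) = f(a₁) + a₁^s f(a₂) for a fixed nonzero integer s and all units a₁, a₂ in any δ-ring extension, then there exists μ ∈ R with f(a) = μ(1 − a^s) for all a; in particular f is a regular function of a alone. -/
open AddMonoidAlgebra Finsupp

variable {R : Type} [CommRing R]

noncomputable def Dmap (δ : Derivation ℤ R R) :
    AddMonoidAlgebra R ℤ →ₗ[ℤ] AddMonoidAlgebra R ℤ :=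
  (AddMonoidAlgebra.coeffLinearEquiv ℤ).symm.toLinearMap ∘ₗ
    Finsupp.mapRange.linearMap (δ.toLinearMap) ∘ₗ (AddMonoidAlgebra.coeffLinearEquiv ℤ).toLinearMap

lemma Dmap_single (δ : Derivation ℤ R R) (m : ℤ) (r : R) :
    Dmap δ (AddMonoidAlgebra.single m r) = AddMonoidAlgebra.single m (δ r) :=
  congrArg AddMonoidAlgebra.ofCoeff (Finsupp.mapRange_single (hf := map_zero δ.toLinearMap))

lemma Dmap_mul (δ : Derivation ℤ R R) (x y : AddMonoidAlgebra R ℤ) :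
    Dmap δ (x * y) = x * Dmap δ y + Dmap δ x * y := by
  induction x using AddMonoidAlgebra.induction_linear with
  | zero => simp
  | add a b ha hb => rw [add_mul, map_add, map_add, ha, hb]; ring
  | single m r =>
    induction y using AddMonoidAlgebra.induction_linear with
    | zero => simp
    | add a b ha hb => rw [mul_add, map_add, map_add, ha, hb]; ring
    | single k t =>
      rw [AddMonoidAlgebra.single_mul_single, Dmap_single, Dmap_single, Dmap_single,
        AddMonoidAlgebra.single_mul_single, AddMonoidAlgebra.single_mul_single,
        δ.leibniz, smul_eq_mul, smul_eq_mul, ← AddMonoidAlgebra.single_add]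
      ring_nf

noncomputable def Dδ (δ : Derivation ℤ R R) :
    Derivation ℤ (AddMonoidAlgebra R ℤ) (AddMonoidAlgebra R ℤ) where
  toLinearMap := Dmap δ
  map_one_eq_zero' := by
    show Dmap δ (AddMonoidAlgebra.single 0 1) = 0
    rw [Dmap_single]; simp
  leibniz' a b := by
    simp only [smul_eq_mul]
    exact (Dmap_mul δ a b).trans (by ring)

@[simp] lemma Dδ_apply (δ : Derivation ℤ R R) (x : AddMonoidAlgebra R ℤ) :
    Dδ δ x = Dmap δ x := rfl

noncomputable def uT : (AddMonoidAlgebra R ℤ)ˣ where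
  val := AddMonoidAlgebra.single 1 1
  inv := AddMonoidAlgebra.single (-1) 1
  val_inv := by
    rw [AddMonoidAlgebra.single_mul_single]; norm_num [AddMonoidAlgebra.one_def]
  inv_val := by
    rw [AddMonoidAlgebra.single_mul_single]; norm_num [AddMonoidAlgebra.one_def]

lemma uT_zpow (s : ℤ) :
    ((uT (R := R) ^ s :) : AddMonoidAlgebra R ℤ) = AddMonoidAlgebra.single s 1 := by
  cases s with
  | ofNat m =>
    rw [Int.ofNat_eq_natCast, zpow_natCast, Units.val_pow_eq_pow_val]
    show (AddMonoidAlgebra.single (1 : ℤ) (1 : R)) ^ m = _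
    rw [AddMonoidAlgebra.single_pow]
    norm_num
  | negSucc m =>
    rw [zpow_negSucc, ← inv_pow, Units.val_pow_eq_pow_val]
    show (AddMonoidAlgebra.single (-1 : ℤ) (1 : R)) ^ (m + 1) = _
    rw [AddMonoidAlgebra.single_pow, one_pow]
    congr 1
    simp [Int.negSucc_eq]

lemma D_iter (δ : Derivation ℤ R R) (r : R) (k : ℕ) :
    (⇑(Dδ δ))^[k] (AddMonoidAlgebra.single 0 r) = AddMonoidAlgebra.single 0 (δ^[k] r) := by
  induction k with
  | zero => rfl
  | succ k ih =>
    rw [Function.iterate_succ_apply', Function.iterate_succ_apply', ih, Dδ_apply, Dmap_single]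




/-- The evaluation vector `(a, a⁻¹, δa, δ²a, …, δⁿa)` attached to a unit `a` of a ring with
a distinguished map `d` (a derivation): index `0 ↦ a`, index `1 ↦ a⁻¹`, and index
`i + 1 ↦ d^[i] a` for `1 ≤ i ≤ n`. -/
def deltaVec {S : Type*} [CommRing S] (d : S → S) (n : ℕ) (a : Sˣ) : Fin (n + 2) → S :=
  fun i =>
    if (i : ℕ) = 0 then (a : S)
    else if (i : ℕ) = 1 then ((a⁻¹ : Sˣ) : S)
    else d^[(i : ℕ) - 1] (a : S)

/-- Rigidity of twisted multiplicative cocycles: let `R` be a ring with a derivation `δ` and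
let `f` be the function on units given by a fixed polynomial `F` in `a, a⁻¹, δa, …, δⁿa`.
If `f(a₁a₂) = f(a₁) + a₁^s f(a₂)` (with `s ≠ 0` a fixed integer) holds for all units in every
`δ`-ring extension of `R`, then there is `μ ∈ R` with `f(a) = μ (1 - a^s)` for all `a ∈ Rˣ`;
in particular `f` is a regular function of `a` alone. -/
theorem statement8 {R : Type} [CommRing R] (δ : Derivation ℤ R R) (n : ℕ)
    (F : MvPolynomial (Fin (n + 2)) R) (s : ℤ) (hs : s ≠ 0)
    (hcoc : ∀ (S : Type) [CommRing S], ∀ (δS : Derivation ℤ S S) (ρ : R →+* S),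
      (∀ r : R, ρ (δ r) = δS (ρ r)) →
      ∀ a₁ a₂ : Sˣ,
        MvPolynomial.eval (deltaVec (⇑δS) n (a₁ * a₂)) (MvPolynomial.map ρ F) =
          MvPolynomial.eval (deltaVec (⇑δS) n a₁) (MvPolynomial.map ρ F) +
            ((a₁ ^ s : Sˣ) : S) *
              MvPolynomial.eval (deltaVec (⇑δS) n a₂) (MvPolynomial.map ρ F)) :
    ∃ μ : R, ∀ a : Rˣ,
      MvPolynomial.eval (deltaVec (⇑δ) n a) F = μ * (1 - ((a ^ s : Rˣ) : R)) := by
  classical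
  set ρ : R →+* AddMonoidAlgebra R ℤ := AddMonoidAlgebra.singleZeroRingHom with hρ
  have hρ_apply : ∀ r : R, ρ r = AddMonoidAlgebra.single 0 r := fun r => rfl
  have hcom : ∀ r : R, ρ (δ r) = Dδ δ (ρ r) := fun r => by
    rw [hρ_apply, hρ_apply, Dδ_apply, Dmap_single]
  have key := hcoc (AddMonoidAlgebra R ℤ) (Dδ δ) ρ hcom
  set G := MvPolynomial.eval (deltaVec (⇑(Dδ δ)) n uT) (MvPolynomial.map ρ F) with hG
  refine ⟨G.coeff 0, fun a => ?_⟩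
  set ua : (AddMonoidAlgebra R ℤ)ˣ := Units.map ρ.toMonoidHom a with hua
  have hvec : deltaVec (⇑(Dδ δ)) n ua = fun i => ρ (deltaVec (⇑δ) n a i) := by
    funext i
    unfold deltaVec
    split_ifs with h0 h1
    · rfl
    · show ((ua⁻¹ :) : AddMonoidAlgebra R ℤ) = ρ ((a⁻¹ : Rˣ) : R)
      rw [hua, ← map_inv (Units.map ρ.toMonoidHom) a]
      rfl
    · show (⇑(Dδ δ))^[(i : ℕ) - 1] ((ua :) : AddMonoidAlgebra R ℤ) = ρ (δ^[(i : ℕ) - 1] (a : R))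
      have : ((ua :) : AddMonoidAlgebra R ℤ) = AddMonoidAlgebra.single 0 ((a : R)) := rfl
      rw [this, D_iter, hρ_apply]
  have heval : MvPolynomial.eval (deltaVec (⇑(Dδ δ)) n ua) (MvPolynomial.map ρ F)
      = ρ (MvPolynomial.eval (deltaVec (⇑δ) n a) F) := by
    rw [hvec, MvPolynomial.eval_map, ← MvPolynomial.eval₂_id (g := deltaVec (⇑δ) n a) F,
      MvPolynomial.eval₂_comp_left ρ (RingHom.id R) (deltaVec (⇑δ) n a) F, RingHom.comp_id]
    rfl
  have hpow : ((ua ^ s :) : AddMonoidAlgebra R ℤ) = ρ ((a ^ s : Rˣ) : R) := by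
    rw [hua, ← map_zpow (Units.map ρ.toMonoidHom) a s]
    rfl
  have E1 := key ua uT
  have E2 := key uT ua
  rw [mul_comm uT ua] at E2
  have E := E1.symm.trans E2
  erw [heval, hpow, uT_zpow, ← hG] at E
  have hE0 := congrArg (fun x => AddMonoidAlgebra.coeff x (0 : ℤ)) E
  rw [hρ_apply, hρ_apply] at hE0
  simp only [AddMonoidAlgebra.coeff_add, Finsupp.add_apply] at hE0
  rw [AddMonoidAlgebra.coeff_single_zero_mul,
    AddMonoidAlgebra.coeff_single, Finsupp.single_eq_same, AddMonoidAlgebra.single_mul_single, AddMonoidAlgebra.coeff_single, Finsupp.single_apply] at hE0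
  simp only [add_zero, if_neg hs] at hE0
  linear_combination hE0
end

section
/- Let x be an n×n matrix of indeterminates over ℤ, let Δ_i(x) be the determinant of the matrix obtained from x by deleting the first i rows and first i columns, and let Δ(x) = Δ_1(x)⋯Δ_{n−1}(x). Let W be the group of n×n permutation matrices. Then there exist w₀, …, w_N ∈ W, elements a_1(x), …, a_N(x) ∈ ℤ[x, Δ(x)⁻¹], and row vectors b_1(x), …, b_N(x) ∈ ℤ[x, Δ(x)⁻¹]^{n−1}, such that, setting s_i(x) = [[a_i(x), b_i(x)],[0, 1_{n−1}]] (block upper-triangular with lower-right block the identity), one has x = w₀ s_1(x) w₁ s_2(x) w₂ ⋯ s_N(x) w_N in GL_n(ℤ[x, Δ(x)⁻¹]). -/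
open MvPolynomial

/-- The determinant `Δ_i(x)` of the generic `n × n` matrix with the first `i` rows and
first `i` columns deleted. -/
noncomputable def genericMinor (n i : ℕ) : MvPolynomial (Fin n × Fin n) ℤ :=
  (Matrix.of fun a b : Fin (n - i) =>
    (X (⟨i + a, by omega⟩, ⟨i + b, by omega⟩) : MvPolynomial (Fin n × Fin n) ℤ)).det

/-- `Δ(x) = Δ_1(x) ⋯ Δ_{n-1}(x)`. -/
noncomputable def genericDelta (n : ℕ) : MvPolynomial (Fin n × Fin n) ℤ :=
  ∏ i ∈ Finset.Ico 1 n, genericMinor n i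

/-- The ring `ℤ[x, Δ(x)⁻¹]`. -/
noncomputable abbrev GenericLoc (n : ℕ) := Localization.Away (genericDelta n)

/-- The generic matrix `x`, viewed over `ℤ[x, Δ(x)⁻¹]`. -/
noncomputable def genericMatrix (n : ℕ) : Matrix (Fin n) (Fin n) (GenericLoc n) :=
  Matrix.of fun i j => algebraMap (MvPolynomial (Fin n × Fin n) ℤ) (GenericLoc n) (X (i, j))

/-- The matrix `s(a, b) = [[a, b], [0, 1_{n-1}]]`: entry `(0,0)` is `a`, the rest of the
first row is the row vector `b`, and the lower-right block is the identity. -/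
def mirabolicMat {A : Type*} [CommRing A] {n : ℕ} (a : A) (b : Fin n → A) :
    Matrix (Fin n) (Fin n) A :=
  Matrix.of fun i j =>
    if (i : ℕ) = 0 then (if (j : ℕ) = 0 then a else b j)
    else if i = j then 1 else 0

namespace Stmt11

open Matrix Equiv

variable {A B : Type*} [CommRing A] [CommRing B] {m n : ℕ}

def gens (n : ℕ) (A : Type*) [CommRing A] : Set (Matrix (Fin n) (Fin n) A) :=
  {M | (∃ σ : Equiv.Perm (Fin n), M = σ.permMatrix A) ∨ ∃ a b, M = mirabolicMat a b}

def IsWord (M : Matrix (Fin n) (Fin n) A) : Prop :=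
  ∃ (N : ℕ) (w : Fin (N + 1) → Equiv.Perm (Fin n)) (a : Fin N → A) (b : Fin N → Fin n → A),
    M = (w 0).permMatrix A *
      (List.ofFn fun i : Fin N => mirabolicMat (a i) (b i) * (w i.succ).permMatrix A).prod

lemma permMatrix_one : ((1 : Equiv.Perm (Fin n)).permMatrix A) = 1 := by
  rw [Equiv.Perm.permMatrix, show (1 : Equiv.Perm (Fin n)) = Equiv.refl _ from rfl,
    Equiv.toPEquiv_refl, PEquiv.toMatrix_refl]

lemma permMatrix_mul (σ τ : Equiv.Perm (Fin n)) :
    ((σ * τ).permMatrix A) = τ.permMatrix A * σ.permMatrix A := by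
  have : σ * τ = τ.trans σ := rfl
  rw [Equiv.Perm.permMatrix, this, Equiv.toPEquiv_trans, PEquiv.toMatrix_trans]

lemma isWord_one : IsWord (1 : Matrix (Fin n) (Fin n) A) :=
  ⟨0, fun _ => 1, Fin.elim0, Fin.elim0, by simp [permMatrix_one]⟩

lemma isWord_perm_mul (σ : Equiv.Perm (Fin n)) {M : Matrix (Fin n) (Fin n) A}
    (h : IsWord M) : IsWord (σ.permMatrix A * M) := by
  obtain ⟨N, w, a, b, rfl⟩ := h
  refine ⟨N, Function.update w 0 (w 0 * σ), a, b, ?_⟩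
  rw [Function.update_self, permMatrix_mul, mul_assoc]
  congr 2

lemma isWord_mirabolic_mul (a₀ : A) (b₀ : Fin n → A) {M : Matrix (Fin n) (Fin n) A}
    (h : IsWord M) : IsWord (mirabolicMat a₀ b₀ * M) := by
  obtain ⟨N, w, a, b, rfl⟩ := h
  refine ⟨N + 1, Fin.cons 1 w, Fin.cons a₀ a, Fin.cons b₀ b, ?_⟩
  rw [List.ofFn_succ]
  simp only [Fin.cons_zero, Fin.cons_succ, permMatrix_one, one_mul, List.prod_cons]
  rw [← mul_assoc]

lemma isWord_list_prod : ∀ l : List (Matrix (Fin n) (Fin n) A),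
    (∀ y ∈ l, y ∈ gens n A) → IsWord l.prod := by
  intro l
  induction l with
  | nil => exact fun _ => isWord_one
  | cons M l ih =>
    intro hl
    rw [List.prod_cons]
    have hrest := ih fun y hy => hl y (List.mem_cons_of_mem _ hy)
    rcases hl M List.mem_cons_self with ⟨σ, rfl⟩ | ⟨a, b, rfl⟩
    · exact isWord_perm_mul σ hrest
    · exact isWord_mirabolic_mul a b hrest

lemma isWord_of_mem_closure {M : Matrix (Fin n) (Fin n) A}
    (h : M ∈ Submonoid.closure (gens n A)) : IsWord M := by
  obtain ⟨l, hl, rfl⟩ := Submonoid.exists_list_of_mem_closure h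
  exact isWord_list_prod l hl


lemma permMatrix_apply (σ : Equiv.Perm (Fin n)) (i j : Fin n) :
    σ.permMatrix A i j = if σ i = j then 1 else 0 := by
  simp [Equiv.Perm.permMatrix, PEquiv.toMatrix, Equiv.toPEquiv_apply, eq_comm]

lemma permMatrix_map (f : A →+* B) (σ : Equiv.Perm (Fin n)) :
    (σ.permMatrix A).map f = σ.permMatrix B := by
  ext i j
  simp [permMatrix_apply, Matrix.map_apply, apply_ite f]

lemma mirabolicMat_map (f : A →+* B) (a : A) (b : Fin n → A) :
    (mirabolicMat a b).map f = mirabolicMat (f a) (f ∘ b) := by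
  ext i j
  simp [mirabolicMat, Matrix.map_apply, apply_ite f]

lemma mem_closure_map (f : A →+* B) {M : Matrix (Fin n) (Fin n) A}
    (h : M ∈ Submonoid.closure (gens n A)) :
    M.map f ∈ Submonoid.closure (gens n B) := by
  induction h using Submonoid.closure_induction with
  | mem x hx =>
    refine Submonoid.subset_closure ?_
    rcases hx with ⟨σ, rfl⟩ | ⟨a, b, rfl⟩
    · exact Or.inl ⟨σ, permMatrix_map f σ⟩
    · exact Or.inr ⟨f a, f ∘ b, mirabolicMat_map f a b⟩
  | one =>
    rw [Matrix.map_one f f.map_zero f.map_one]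
    exact Submonoid.one_mem _
  | mul x y _ _ hx hy =>
    rw [Matrix.map_mul]
    exact Submonoid.mul_mem _ hx hy

def diagOne (M : Matrix (Fin m) (Fin m) A) : Matrix (Fin (m + 1)) (Fin (m + 1)) A :=
  Matrix.of fun i j =>
    if hi : (i : ℕ) = 0 then (if (j : ℕ) = 0 then 1 else 0)
    else if hj : (j : ℕ) = 0 then 0
    else M ⟨(i : ℕ) - 1, by have := i.isLt; omega⟩ ⟨(j : ℕ) - 1, by have := j.isLt; omega⟩

@[simp] lemma diagOne_zero_zero (M : Matrix (Fin m) (Fin m) A) : diagOne M 0 0 = 1 := rfl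

@[simp] lemma diagOne_zero_succ (M : Matrix (Fin m) (Fin m) A) (j : Fin m) :
    diagOne M 0 j.succ = 0 := by
  simp [diagOne, Fin.succ_ne_zero, Fin.val_succ]

@[simp] lemma diagOne_succ_zero (M : Matrix (Fin m) (Fin m) A) (i : Fin m) :
    diagOne M i.succ 0 = 0 := by
  simp [diagOne, Fin.val_succ]

@[simp] lemma diagOne_succ_succ (M : Matrix (Fin m) (Fin m) A) (i j : Fin m) :
    diagOne M i.succ j.succ = M i j := by
  simp [diagOne, Fin.val_succ]

lemma diagOne_one : diagOne (1 : Matrix (Fin m) (Fin m) A) = 1 := by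
  ext i j
  induction i using Fin.cases <;> induction j using Fin.cases <;>
    simp [Matrix.one_apply, Fin.succ_ne_zero, (Fin.succ_ne_zero _).symm, Fin.succ_inj]

lemma diagOne_mul (M N : Matrix (Fin m) (Fin m) A) :
    diagOne (M * N) = diagOne M * diagOne N := by
  ext i j
  rw [Matrix.mul_apply, Fin.sum_univ_succ]
  induction i using Fin.cases <;> induction j using Fin.cases <;>
    simp [Matrix.mul_apply]


@[simp] lemma mirabolicMat_zero_zero (a : A) (b : Fin (n + 1) → A) :
    mirabolicMat a b 0 0 = a := rfl

@[simp] lemma mirabolicMat_zero_succ (a : A) (b : Fin (n + 1) → A) (j : Fin n) :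
    mirabolicMat a b 0 j.succ = b j.succ := by
  simp [mirabolicMat, Fin.val_succ]

@[simp] lemma mirabolicMat_succ_apply (a : A) (b : Fin (n + 1) → A) (i : Fin n)
    (j : Fin (n + 1)) : mirabolicMat a b i.succ j = if i.succ = j then 1 else 0 := by
  simp [mirabolicMat, Fin.val_succ]

@[simp] lemma mirabolicMat_one_apply (a : A) (b : Fin (n + 2) → A) (j : Fin (n + 2)) :
    mirabolicMat a b 1 j = if 1 = j then 1 else 0 := by
  simp [mirabolicMat]

lemma diagOne_perm (σ : Equiv.Perm (Fin m)) :
    diagOne (σ.permMatrix A) = (Equiv.Perm.decomposeFin.symm (0, σ)).permMatrix A := by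
  ext i j
  induction i using Fin.cases <;> induction j using Fin.cases <;>
    simp [permMatrix_apply, Equiv.toPEquiv_apply, Equiv.Perm.decomposeFin_symm_apply_zero,
      Equiv.Perm.decomposeFin_symm_apply_succ, Equiv.swap_self,
      Fin.succ_ne_zero, (Fin.succ_ne_zero _).symm,
      Fin.succ_inj, eq_comm]

lemma diagOne_mirabolic_mem (a : A) (b : Fin m → A) :
    diagOne (mirabolicMat a b) ∈ Submonoid.closure (gens (m + 1) A) := by
  cases m with
  | zero =>
    have h1 : diagOne (mirabolicMat a b) = 1 := by
      ext i j
      fin_cases i <;> fin_cases j <;> rfl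
    rw [h1]; exact Submonoid.one_mem _
  | succ k =>
    set b'' : Fin (k + 2) → A := fun j =>
      if h : (j : ℕ) < 2 then 0 else b ⟨(j : ℕ) - 1, by have := j.isLt; omega⟩ with hb''
    have hs0 : Equiv.swap (0 : Fin (k + 2)) 1 0 = 1 := Equiv.swap_apply_left _ _
    have hs1 : Equiv.swap (0 : Fin (k + 2)) 1 1 = 0 := Equiv.swap_apply_right _ _
    have hss : ∀ x : Fin k, Equiv.swap (0 : Fin (k + 2)) 1 x.succ.succ = x.succ.succ := by
      intro x
      refine Equiv.swap_apply_of_ne_of_ne (Fin.succ_ne_zero _) ?_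
      rw [← Fin.succ_zero_eq_one]
      exact fun h => Fin.succ_ne_zero _ (Fin.succ_injective _ h)
    have hb2 : ∀ j : Fin k, b'' j.succ.succ = b j.succ := by
      intro j
      have hv : ((j.succ.succ : Fin (k + 2)) : ℕ) = (j : ℕ) + 2 := by
        simp [Fin.val_succ]
      simp only [hb'']
      rw [dif_neg (by omega)]
      apply congrArg b
      apply Fin.ext
      simp [hv]
    have hb1 : b'' 1 = 0 := by simp only [hb'']; rfl
    have h10 : (1 : Fin (k + 2)) ≠ 0 := one_ne_zero
    have h1ss : ∀ x : Fin k, (1 : Fin (k + 2)) ≠ x.succ.succ := by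
      intro x h
      have := congrArg Fin.val h
      simp [Fin.val_succ] at this
    have key : diagOne (mirabolicMat a b) =
        (Equiv.swap (0 : Fin (k + 2)) 1).permMatrix A *
          (mirabolicMat a b'' * (Equiv.swap (0 : Fin (k + 2)) 1).permMatrix A) := by
      rw [Equiv.Perm.permMatrix, PEquiv.mul_toMatrix_toPEquiv, PEquiv.toMatrix_toPEquiv_mul]
      ext i j
      simp only [Matrix.submatrix_apply, id_eq, Equiv.symm_swap]
      induction i using Fin.cases with
      | zero =>
        induction j using Fin.cases with
        | zero => simp [hs0]
        | succ j' =>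
          induction j' using Fin.cases with
          | zero =>
            simp only [Fin.succ_zero_eq_one, hs0, hs1]
            rw [show ((1 : Fin (k + 2))) = (0 : Fin (k + 1)).succ from
              (Fin.succ_zero_eq_one).symm, diagOne_zero_succ, mirabolicMat_succ_apply,
              if_neg (Fin.succ_ne_zero _)]
          | succ j'' => simp [hs0, hss, h1ss j'', Fin.succ_ne_zero]
      | succ i' =>
        induction i' using Fin.cases with
        | zero =>
          rw [Fin.succ_zero_eq_one, hs1]
          induction j using Fin.cases with
          | zero =>
            simp only [hs0]
            rw [show ((1 : Fin (k + 2))) = (0 : Fin (k + 1)).succ from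
              (Fin.succ_zero_eq_one).symm, diagOne_succ_zero, mirabolicMat_zero_succ,
              Fin.succ_zero_eq_one, hb1]
          | succ j' =>
            induction j' using Fin.cases with
            | zero =>
              simp only [Fin.succ_zero_eq_one, hs1]
              simp [diagOne, mirabolicMat, Fin.val_one]
            | succ j'' =>
              rw [hss]
              simp only [mirabolicMat_zero_succ, hb2]
              simp [diagOne, mirabolicMat, Fin.val_succ, Fin.val_one]
              try (apply congrArg b; exact Fin.ext (by simp [Fin.val_succ]))
        | succ i'' =>
          rw [hss]
          induction j using Fin.cases with
          | zero => simp [hs0, Fin.succ_ne_zero, (h1ss i'').symm]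
          | succ j' =>
            induction j' using Fin.cases with
            | zero =>
              simp only [Fin.succ_zero_eq_one, hs1]
              simp [diagOne, mirabolicMat, Fin.val_succ, Fin.val_one, -Fin.coe_ofNat_eq_mod]
            | succ j'' => simp [hss, Fin.succ_inj]
    rw [key]
    exact Submonoid.mul_mem _ (Submonoid.subset_closure (Or.inl ⟨_, rfl⟩))
      (Submonoid.mul_mem _ (Submonoid.subset_closure (Or.inr ⟨a, b'', rfl⟩))
        (Submonoid.subset_closure (Or.inl ⟨_, rfl⟩)))

lemma diagOne_mem {M : Matrix (Fin m) (Fin m) A} (h : M ∈ Submonoid.closure (gens m A)) :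
    diagOne M ∈ Submonoid.closure (gens (m + 1) A) := by
  induction h using Submonoid.closure_induction with
  | mem x hx =>
    rcases hx with ⟨σ, rfl⟩ | ⟨a, b, rfl⟩
    · rw [diagOne_perm]; exact Submonoid.subset_closure (Or.inl ⟨_, rfl⟩)
    · exact diagOne_mirabolic_mem a b
  | one => rw [diagOne_one]; exact Submonoid.one_mem _
  | mul x y _ _ hx hy => rw [diagOne_mul]; exact Submonoid.mul_mem _ hx hy


def lowMat (c : Fin m → A) : Matrix (Fin (m + 1)) (Fin (m + 1)) A :=
  Matrix.of fun i j =>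
    if hi : (i : ℕ) = 0 then (if (j : ℕ) = 0 then 1 else 0)
    else if (j : ℕ) = 0 then c ⟨(i : ℕ) - 1, by have := i.isLt; omega⟩
    else if i = j then 1 else 0

@[simp] lemma lowMat_zero_zero (c : Fin m → A) : lowMat c 0 0 = 1 := rfl

@[simp] lemma lowMat_zero_succ (c : Fin m → A) (j : Fin m) : lowMat c 0 j.succ = 0 := by
  simp [lowMat, Fin.val_succ]

@[simp] lemma lowMat_succ_zero (c : Fin m → A) (i : Fin m) : lowMat c i.succ 0 = c i := by
  simp [lowMat, Fin.val_succ]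

@[simp] lemma lowMat_succ_succ (c : Fin m → A) (i j : Fin m) :
    lowMat c i.succ j.succ = if i = j then 1 else 0 := by
  simp [lowMat, Fin.val_succ, Fin.succ_inj]

lemma lowMat_zero : lowMat (fun _ => (0 : A) : Fin m → A) = 1 := by
  ext i j
  induction i using Fin.cases <;> induction j using Fin.cases <;>
    simp [Matrix.one_apply, Fin.succ_ne_zero, (Fin.succ_ne_zero _).symm, Fin.succ_inj]

lemma lowMat_mul (c d : Fin m → A) : lowMat c * lowMat d = lowMat (c + d) := by
  ext i j
  rw [Matrix.mul_apply, Fin.sum_univ_succ]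
  induction i using Fin.cases <;> induction j using Fin.cases <;>
    simp [ite_mul, Finset.sum_ite_eq, Pi.add_apply]

lemma lowSingle_mem (j : Fin m) (c : A) :
    lowMat (fun i => if i = j then c else 0) ∈ Submonoid.closure (gens (m + 1) A) := by
  set s : Fin (m + 1) → A := fun k => if k = j.succ then c else 0 with hs
  have hsa : Equiv.swap (0 : Fin (m + 1)) j.succ 0 = j.succ := Equiv.swap_apply_left _ _
  have hsb : Equiv.swap (0 : Fin (m + 1)) j.succ j.succ = 0 := Equiv.swap_apply_right _ _
  have hsc : ∀ x : Fin m, x ≠ j →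
      Equiv.swap (0 : Fin (m + 1)) j.succ x.succ = x.succ := by
    intro x hx
    exact Equiv.swap_apply_of_ne_of_ne (Fin.succ_ne_zero _) ((Fin.succ_injective _).ne hx)
  have key : lowMat (fun i => if i = j then c else 0) =
      (Equiv.swap (0 : Fin (m + 1)) j.succ).permMatrix A *
        (mirabolicMat 1 s * (Equiv.swap (0 : Fin (m + 1)) j.succ).permMatrix A) := by
    rw [Equiv.Perm.permMatrix, PEquiv.mul_toMatrix_toPEquiv, PEquiv.toMatrix_toPEquiv_mul]
    ext i k
    simp only [Matrix.submatrix_apply, id_eq, Equiv.symm_swap]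
    induction i using Fin.cases with
    | zero =>
      rw [hsa]
      induction k using Fin.cases with
      | zero => rw [hsa]; simp
      | succ k' =>
        by_cases hk : k' = j
        · subst hk
          rw [hsb]
          simp [Fin.succ_ne_zero]
        · rw [hsc k' hk]
          simp [Fin.succ_inj, hk, Ne.symm hk]
    | succ i' =>
      by_cases hi : i' = j
      · subst hi
        rw [hsb]
        induction k using Fin.cases with
        | zero =>
          rw [hsa, mirabolicMat_zero_succ, hs]
          simp
        | succ k' =>
          by_cases hk : k' = i'
          · subst hk
            rw [hsb]
            simp
          · rw [hsc k' hk]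
            rw [mirabolicMat_zero_succ, hs]
            simp [Fin.succ_inj, hk, Ne.symm hk]
      · rw [hsc i' hi]
        induction k using Fin.cases with
        | zero =>
          rw [hsa]
          simp [Fin.succ_inj, hi]
        | succ k' =>
          by_cases hk : k' = j
          · subst hk
            rw [hsb]
            simp [Fin.succ_ne_zero, fun h => hi (h : i' = k')]
          · rw [hsc k' hk]
            simp [Fin.succ_inj]
  rw [key]
  exact Submonoid.mul_mem _ (Submonoid.subset_closure (Or.inl ⟨_, rfl⟩))
    (Submonoid.mul_mem _ (Submonoid.subset_closure (Or.inr ⟨1, s, rfl⟩))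
      (Submonoid.subset_closure (Or.inl ⟨_, rfl⟩)))

lemma lowMat_mem (c : Fin m → A) : lowMat c ∈ Submonoid.closure (gens (m + 1) A) := by
  have claim : ∀ t : Finset (Fin m),
      lowMat (fun i => if i ∈ t then c i else 0) ∈ Submonoid.closure (gens (m + 1) A) := by
    intro t
    induction t using Finset.induction_on with
    | empty => simpa [lowMat_zero] using Submonoid.one_mem _
    | @insert j t hj ih =>
      have hfun : (fun i => if i ∈ insert j t then c i else 0) =
          (fun i => if i = j then c j else 0) + fun i => if i ∈ t then c i else 0 := by
        funext i
        by_cases h : i = j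
        · subst h; simp [hj]
        · simp [h, Finset.mem_insert, h]
      rw [hfun, ← lowMat_mul]
      exact Submonoid.mul_mem _ (lowSingle_mem j (c j)) ih
  have := claim Finset.univ
  simpa using this


lemma diagOne_mul_lowMat (W : Matrix (Fin m) (Fin m) A) (c : Fin m → A) :
    diagOne W * lowMat c = Matrix.of fun i k : Fin (m + 1) =>
      if hi : (i : ℕ) = 0 then (if (k : ℕ) = 0 then 1 else 0)
      else if hk : (k : ℕ) = 0 then
        W.mulVec c ⟨(i : ℕ) - 1, by have := i.isLt; omega⟩
      else W ⟨(i : ℕ) - 1, by have := i.isLt; omega⟩ ⟨(k : ℕ) - 1, by have := k.isLt; omega⟩ := by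
  ext i k
  rw [Matrix.mul_apply, Fin.sum_univ_succ]
  induction i using Fin.cases <;> induction k using Fin.cases <;>
    simp [Matrix.mulVec, dotProduct, Fin.val_succ, mul_ite,
      Finset.sum_ite_eq', Fin.succ_ne_zero]

lemma factor_key (M : Matrix (Fin (m + 1)) (Fin (m + 1)) A)
    (W : Matrix (Fin m) (Fin m) A) [Invertible W]
    (hW : ∀ i j, W i j = M i.succ j.succ) :
    M = mirabolicMat (M 0 0 - Matrix.vecMul (fun j => M 0 j.succ) (⅟W) ⬝ᵥ fun i => M i.succ 0)
          (fun j => if hj : (j : ℕ) = 0 then 0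
            else Matrix.vecMul (fun j => M 0 j.succ) (⅟W) ⟨(j : ℕ) - 1, by have := j.isLt; omega⟩) *
        (diagOne W * lowMat ((⅟W).mulVec fun i => M i.succ 0)) := by
  set y : Fin m → A := fun j => M 0 j.succ with hy
  set z : Fin m → A := fun i => M i.succ 0 with hz
  rw [diagOne_mul_lowMat]
  have hWc : W *ᵥ (⅟W *ᵥ z) = z := by
    rw [Matrix.mulVec_mulVec, mul_invOf_self, Matrix.one_mulVec]
  have hbW : (y ᵥ* ⅟W) ᵥ* W = y := by
    rw [Matrix.vecMul_vecMul, invOf_mul_self, Matrix.vecMul_one]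
  ext i k
  rw [Matrix.mul_apply, Fin.sum_univ_succ]
  induction i using Fin.cases with
  | zero =>
    induction k using Fin.cases with
    | zero =>
      simp [Nat.succ_ne_zero, Nat.add_sub_cancel]
      simp only [dotProduct]
      ring
    | succ k' =>
      simp [Nat.succ_ne_zero, Nat.add_sub_cancel]
      have hbW' : (y ᵥ* W⁻¹) ᵥ* W = y := by
        rw [← Matrix.invOf_eq_nonsing_inv]; exact hbW
      rw [show (∑ x : Fin m, (y ᵥ* W⁻¹) x * W x k') = ((y ᵥ* W⁻¹) ᵥ* W) k' by
        simp [Matrix.vecMul, dotProduct]]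
      rw [hbW']
  | succ i' =>
    have hrow : ∀ j : Fin (m + 1),
        mirabolicMat (M 0 0 - (y ᵥ* ⅟W) ⬝ᵥ z)
          (fun j => if hj : (j : ℕ) = 0 then 0
            else (y ᵥ* ⅟W) ⟨(j : ℕ) - 1, by have := j.isLt; omega⟩) i'.succ j
          = if i'.succ = j then 1 else 0 := fun j => mirabolicMat_succ_apply _ _ _ _
    rw [hrow, if_neg (Fin.succ_ne_zero _)]
    simp only [hrow, Fin.succ_inj, ite_mul, one_mul, zero_mul, zero_add,
      Finset.sum_ite_eq, Finset.mem_univ, if_true]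
    induction k using Fin.cases with
    | zero =>
      simp [Nat.succ_ne_zero, Nat.add_sub_cancel]
      rfl
    | succ k' =>
      simp [Nat.succ_ne_zero, Nat.add_sub_cancel]
      rw [← hW]


lemma mem_closure_of_block (M : Matrix (Fin (m + 1)) (Fin (m + 1)) A)
    (W : Matrix (Fin m) (Fin m) A) [Invertible W]
    (hW : ∀ i j, W i j = M i.succ j.succ)
    (hmem : W ∈ Submonoid.closure (gens m A)) :
    M ∈ Submonoid.closure (gens (m + 1) A) := by
  rw [factor_key M W hW]
  exact Submonoid.mul_mem _ (Submonoid.subset_closure (Or.inr ⟨_, _, rfl⟩))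
    (Submonoid.mul_mem _ (diagOne_mem hmem) (lowMat_mem _))

end Stmt11

open Stmt11

theorem generic_mem : ∀ n, genericMatrix n ∈ Submonoid.closure (gens n (GenericLoc n)) := by
  intro n
  induction n with
  | zero =>
    have h : genericMatrix 0 = 1 := by
      ext i j
      exact i.elim0
    rw [h]
    exact Submonoid.one_mem _
  | succ m ih =>
    set ψ := MvPolynomial.rename (fun p : Fin m × Fin m => (p.1.succ, p.2.succ))
      (R := ℤ) with hψ
    set g : MvPolynomial (Fin m × Fin m) ℤ →+* GenericLoc (m + 1) :=
      (algebraMap (MvPolynomial (Fin (m + 1) × Fin (m + 1)) ℤ) (GenericLoc (m + 1))).comp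
        ψ.toRingHom with hg
    -- ψ maps minors to shifted minors
    have hminor : ∀ i : ℕ, ψ (genericMinor m i) = genericMinor (m + 1) (i + 1) := by
      intro i
      have hcard : m - i = (m + 1) - (i + 1) := by omega
      rw [genericMinor, genericMinor, AlgHom.map_det]
      rw [← Matrix.det_submatrix_equiv_self (finCongr hcard)]
      congr 1
      refine Matrix.ext fun a b => ?_
      simp only [AlgHom.mapMatrix_apply, Matrix.map_apply, Matrix.submatrix_apply,
        Matrix.of_apply, hψ, MvPolynomial.rename_X, finCongr_apply]
      refine congrArg (fun p => (X p : MvPolynomial (Fin (m + 1) × Fin (m + 1)) ℤ)) (Prod.ext ?_ ?_) <;>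
        (apply Fin.ext; simp [Fin.val_succ, Fin.coe_cast]; omega)
    have hdvd : ψ (genericDelta m) ∣ genericDelta (m + 1) := by
      rw [genericDelta, map_prod]
      simp only [hminor]
      have himg : ∀ i ∈ Finset.Ico 1 m, genericMinor (m + 1) (i + 1) =
          genericMinor (m + 1) (i + 1) := fun _ _ => rfl
      rw [show (∏ i ∈ Finset.Ico 1 m, genericMinor (m + 1) (i + 1)) =
          ∏ j ∈ Finset.Ico 2 (m + 1), genericMinor (m + 1) j by
        rw [show Finset.Ico 2 (m + 1) = (Finset.Ico 1 m).image (· + 1) by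
          rw [Finset.image_add_right_Ico]]
        rw [Finset.prod_image]
        intro x _ y _ h
        have h' : x + 1 = y + 1 := h
        omega]
      rw [genericDelta]
      exact Finset.prod_dvd_prod_of_subset _ _ _ (by
        intro x hx
        simp only [Finset.mem_Ico] at hx ⊢
        omega)
    have hunit : IsUnit (g (genericDelta m)) := by
      rw [hg, RingHom.comp_apply]
      exact IsLocalization.Away.isUnit_of_dvd (x := genericDelta (m + 1))
        (S := GenericLoc (m + 1)) hdvd
    set φ : GenericLoc m →+* GenericLoc (m + 1) :=
      IsLocalization.Away.lift (genericDelta m) hunit with hφdef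
    have hφ : ∀ p : MvPolynomial (Fin m × Fin m) ℤ,
        φ (algebraMap _ (GenericLoc m) p) =
          algebraMap _ (GenericLoc (m + 1)) (ψ p) := by
      intro p
      rw [hφdef, IsLocalization.Away.lift_eq]
      rfl
    set Wmat : Matrix (Fin m) (Fin m) (GenericLoc (m + 1)) := (genericMatrix m).map φ
      with hWmat
    have hW : ∀ i j, Wmat i j = genericMatrix (m + 1) i.succ j.succ := by
      intro i j
      rw [hWmat, Matrix.map_apply, genericMatrix, genericMatrix, Matrix.of_apply,
        Matrix.of_apply, hφ, hψ]
      rw [MvPolynomial.rename_X]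
    have hdet : Wmat.det =
        algebraMap _ (GenericLoc (m + 1)) (genericMinor (m + 1) 1) := by
      rw [genericMinor, RingHom.map_det]
      congr 1
      refine Matrix.ext fun a b => ?_
      rw [hW]
      simp only [RingHom.mapMatrix_apply, Matrix.map_apply, Matrix.of_apply, genericMatrix]
      refine congrArg _ (congrArg X (Prod.ext ?_ ?_)) <;>
        (apply Fin.ext; simp [Fin.val_succ]; omega)
    have hdetunit : IsUnit Wmat.det := by
      rw [hdet]
      cases m with
      | zero =>
        have h1 : genericMinor 1 1 = 1 := by
          rw [genericMinor]
          exact Matrix.det_fin_zero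
        rw [h1, map_one]
        exact isUnit_one
      | succ k =>
        refine IsLocalization.Away.isUnit_of_dvd (x := genericDelta (k + 1 + 1))
          (S := GenericLoc (k + 1 + 1)) ?_
        exact Finset.dvd_prod_of_mem _ (by simp [Finset.mem_Ico])
    have : Invertible Wmat := Matrix.invertibleOfIsUnitDet Wmat hdetunit
    exact mem_closure_of_block (genericMatrix (m + 1)) Wmat
      (fun i j => (hW i j)) (mem_closure_map φ (ih))

/-- The generic matrix `x` factors as `w₀ s₁(x) w₁ s₂(x) w₂ ⋯ s_N(x) w_N`, with `w_i`
permutation matrices and `s_i(x) = [[a_i(x), b_i(x)], [0, 1_{n-1}]]` having entries in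
`ℤ[x, Δ(x)⁻¹]`. -/
theorem statement11 (n : ℕ) :
    ∃ (N : ℕ) (w : Fin (N + 1) → Equiv.Perm (Fin n))
      (a : Fin N → GenericLoc n) (b : Fin N → Fin n → GenericLoc n),
      genericMatrix n =
        (w 0).permMatrix (GenericLoc n) *
          (List.ofFn fun i : Fin N =>
            mirabolicMat (a i) (b i) * (w i.succ).permMatrix (GenericLoc n)).prod := by
  obtain ⟨N, w, a, b, h⟩ := Stmt11.isWord_of_mem_closure (generic_mem n)
  exact ⟨N, w, a, b, h⟩
end
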